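/- For every positive integer n and every even integer d with d ≥ 2·rn(n)+2, the automaton R_{n,d} is not good for games: no transition strategy for R_{n,d} is winning for L(R_{n,d}). That is, for every transition strategy σ there exists a word w ∈ L(R_{n,d}) such that the run of R_{n,d} following σ reading w is rejecting. -/

import Mathlib

namespace PGSep

/-- Letters of the alphabet `Σ_{n,d}`: triples (source node, priority, target node). -/
abbrev Letter : Type := ℕ × ℕ × ℕ

/-- The priority component of a letter. -/
def prio (e : Letter) : ℕ := e.2.1

/-- Membership in the alphabet `Σ_{n,d} = {1,…,n} × {1,…,d} × {1,…,n}`. -/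
def InAlph (n d : ℕ) (e : Letter) : Prop :=
  1 ≤ e.1 ∧ e.1 ≤ n ∧ 1 ≤ e.2.1 ∧ e.2.1 ≤ d ∧ 1 ≤ e.2.2 ∧ e.2.2 ≤ n

/-- Infinite words over the alphabet. -/
abbrev Word : Type := ℕ → Letter

/-- `p` occurs infinitely often among the values of `f`. -/
def InfOft (f : ℕ → ℕ) (p : ℕ) : Prop := ∀ N, ∃ k, N ≤ k ∧ f k = p

/-- The largest value occurring infinitely often in `f` exists and is even. -/
def MaxInfOftEven (f : ℕ → ℕ) : Prop :=
  ∃ p, Even p ∧ InfOft f p ∧ ∀ q, InfOft f q → q ≤ p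

/-- The largest value occurring infinitely often in `f` exists and is odd. -/
def MaxInfOftOdd (f : ℕ → ℕ) : Prop :=
  ∃ p, Odd p ∧ InfOft f p ∧ ∀ q, InfOft f q → q ≤ p

/-- `LimsupEven_{n,d}`: the largest priority occurring infinitely often is even. -/
def LimsupEven (w : Word) : Prop := MaxInfOftEven fun k => prio (w k)

/-- `LimsupOdd_{n,d}`: the largest priority occurring infinitely often is odd. -/
def LimsupOdd (w : Word) : Prop := MaxInfOftOdd fun k => prio (w k)

/-- An infinite sequence of triples is a path in the edge set `E`. -/
def IsPathSeq {V : Type*} (E : Set (V × ℕ × V)) (w : ℕ → V × ℕ × V) : Prop :=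
  ∀ k, w k ∈ E ∧ (w k).2.2 = (w (k + 1)).1

/-- A game graph with `n` nodes (the set {1,…,n}) and priorities up to `d`. -/
structure GameGraph (n d : ℕ) where
  /-- nodes owned by Even (V_□) -/
  evenN : Set ℕ
  /-- nodes owned by Odd (V_△) -/
  oddN : Set ℕ
  /-- the starting node -/
  start : ℕ
  /-- the set of edges (a subset of the alphabet) -/
  edges : Set Letter
  union_eq : evenN ∪ oddN = Set.Icc 1 n
  disj : Disjoint evenN oddN
  start_mem : start ∈ Set.Icc 1 n
  edges_alph : ∀ e ∈ edges, InAlph n d e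
  total : ∀ v ∈ Set.Icc (1 : ℕ) n, ∃ e ∈ edges, e.1 = v

/-- A play in a game graph: an infinite path starting at the starting node,
identified with the word listing its consecutive edges. -/
def IsPlay {n d : ℕ} (G : GameGraph n d) (w : Word) : Prop :=
  (w 0).1 = G.start ∧ IsPathSeq G.edges w

/-- A positional strategy for Even: one outgoing edge for each node of `V_□`. -/
structure EPosStrat {n d : ℕ} (G : GameGraph n d) where
  choice : ℕ → Letter
  mem : ∀ v ∈ G.evenN, choice v ∈ G.edges ∧ (choice v).1 = v

/-- A positional strategy for Odd: one outgoing edge for each node of `V_△`. -/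
structure OPosStrat {n d : ℕ} (G : GameGraph n d) where
  choice : ℕ → Letter
  mem : ∀ v ∈ G.oddN, choice v ∈ G.edges ∧ (choice v).1 = v

/-- A play arises from a positional strategy of Even. -/
def ArisesE {n d : ℕ} {G : GameGraph n d} (τ : EPosStrat G) (w : Word) : Prop :=
  IsPlay G w ∧ ∀ k, (w k).1 ∈ G.evenN → w k = τ.choice (w k).1

/-- A play arises from a positional strategy of Odd. -/
def ArisesO {n d : ℕ} {G : GameGraph n d} (τ : OPosStrat G) (w : Word) : Prop :=
  IsPlay G w ∧ ∀ k, (w k).1 ∈ G.oddN → w k = τ.choice (w k).1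

/-- A positional strategy for Even is winning: every arising play is won by Even. -/
def EWinningPos {n d : ℕ} {G : GameGraph n d} (τ : EPosStrat G) : Prop :=
  ∀ w, ArisesE τ w → LimsupEven w

/-- A positional strategy for Odd is winning: every arising play is won by Odd
(i.e. not won by Even). -/
def OWinningPos {n d : ℕ} {G : GameGraph n d} (τ : OPosStrat G) : Prop :=
  ∀ w, ArisesO τ w → ¬ LimsupEven w

/-- `PosEven_{n,d}`: plays arising from positional winning strategies for Even. -/
def PosEven (n d : ℕ) : Set Word :=
  {w | ∃ G : GameGraph n d, ∃ τ : EPosStrat G, EWinningPos τ ∧ ArisesE τ w}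

/-- `PosOdd_{n,d}`: plays arising from positional winning strategies for Odd. -/
def PosOdd (n d : ℕ) : Set Word :=
  {w | ∃ G : GameGraph n d, ∃ τ : OPosStrat G, OWinningPos τ ∧ ArisesO τ w}

/-- A nondeterministic automaton reading letters, with state space `Q`. -/
structure Automaton (Q : Type*) where
  init : Q
  trans : Set (Q × Letter × ℕ × Q)

/-- Transitions: (source state, letter, emitted priority, target state). -/
abbrev Trans (Q : Type*) : Type _ := Q × Letter × ℕ × Q

def tSrc {Q : Type*} (t : Trans Q) : Q := t.1
def tLetter {Q : Type*} (t : Trans Q) : Letter := t.2.1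
def tPrio {Q : Type*} (t : Trans Q) : ℕ := t.2.2.1
def tTgt {Q : Type*} (t : Trans Q) : Q := t.2.2.2

/-- `A` is a (total) nondeterministic parity automaton over `Σ_{n,d}` with
transition priorities in `{1,…,d'}`. -/
def IsParityAutomaton (n d d' : ℕ) {Q : Type*} (A : Automaton Q) : Prop :=
  (∀ t ∈ A.trans, InAlph n d (tLetter t) ∧ 1 ≤ tPrio t ∧ tPrio t ≤ d') ∧
  (∀ (s : Q) (e : Letter), InAlph n d e → ∃ p s', (s, e, p, s') ∈ A.trans)

/-- A run of the automaton: an infinite path of transitions starting at `init`. -/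
def IsRun {Q : Type*} (A : Automaton Q) (ρ : ℕ → Trans Q) : Prop :=
  tSrc (ρ 0) = A.init ∧ ∀ k, ρ k ∈ A.trans ∧ tTgt (ρ k) = tSrc (ρ (k + 1))

/-- The run `ρ` reads the word `w`. -/
def Reads {Q : Type*} (ρ : ℕ → Trans Q) (w : Word) : Prop := ∀ k, tLetter (ρ k) = w k

/-- A run is accepting: the largest priority labelling infinitely many
of its transitions is even. -/
def Accepting {Q : Type*} (ρ : ℕ → Trans Q) : Prop := MaxInfOftEven fun k => tPrio (ρ k)

/-- The language of the automaton. -/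
def Lang {Q : Type*} (A : Automaton Q) : Set Word :=
  {w | ∃ ρ, IsRun A ρ ∧ Reads ρ w ∧ Accepting ρ}

/-- A transition strategy for `A`, resolving nondeterminism based on the word read
so far, the current state, and the next letter. -/
structure TransStrat (n d : ℕ) {Q : Type*} (A : Automaton Q) where
  app : List Letter → Q → Letter → Trans Q
  valid : ∀ w s e, InAlph n d e →
    app w s e ∈ A.trans ∧ tSrc (app w s e) = s ∧ tLetter (app w s e) = e

/-- The state reached after reading the first `k` letters of `w` following `σ`. -/
def stateAt {n d : ℕ} {Q : Type*} (A : Automaton Q) (σ : TransStrat n d A) (w : Word) :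
    ℕ → Q
  | 0 => A.init
  | k + 1 => tTgt (σ.app ((List.range k).map w) (stateAt A σ w k) (w k))

/-- The run obtained by following the transition strategy `σ` while reading `w`. -/
def followRun {n d : ℕ} {Q : Type*} (A : Automaton Q) (σ : TransStrat n d A) (w : Word)
    (k : ℕ) : Trans Q :=
  σ.app ((List.range k).map w) (stateAt A σ w k) (w k)

/-- The transition strategy `σ` is winning for the set of words `L`. -/
def WinningFor {n d : ℕ} {Q : Type*} (A : Automaton Q) (σ : TransStrat n d A)
    (L : Set Word) : Prop :=
  ∀ w ∈ L, Accepting (followRun A σ w)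

/-- `A` is good for games: some transition strategy is winning for the whole `L(A)`. -/
def GFG (n d : ℕ) {Q : Type*} (A : Automaton Q) : Prop :=
  ∃ σ : TransStrat n d A, WinningFor A σ (Lang A)

/-- `A` is a parity-games separator. -/
def PGSeparator (n d : ℕ) {Q : Type*} (A : Automaton Q) : Prop :=
  (∀ w ∈ PosEven n d, w ∈ Lang A) ∧ ∀ w ∈ PosOdd n d, w ∉ Lang A

/-- `A` is a strong PG separator: additionally it rejects all of `LimsupOdd`. -/
def StrongPGSeparator (n d : ℕ) {Q : Type*} (A : Automaton Q) : Prop :=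
  PGSeparator n d A ∧ ∀ w : Word, LimsupOdd w → w ∉ Lang A

/-- `A` is suitable for parity games (SFPG). -/
def SFPG (n d : ℕ) {Q : Type*} (A : Automaton Q) : Prop :=
  PGSeparator n d A ∧
  ∀ (G : GameGraph n d) (τ : EPosStrat G), EWinningPos τ →
    ∃ σ : TransStrat n d A, WinningFor A σ {w | ArisesE τ w}

/-- A generic game with parity winning condition, over an arbitrary set of nodes. -/
structure PGame (V : Type*) where
  evenOwn : V → Prop
  start : V
  edges : Set (V × ℕ × V)

/-- A play of a generic game. -/
def PGame.IsPlay {V : Type*} (g : PGame V) (w : ℕ → V × ℕ × V) : Prop :=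
  (w 0).1 = g.start ∧ IsPathSeq g.edges w

/-- `IsFinPath E u l v`: the list of edges `l` is a finite path from `u` to `v`. -/
def IsFinPath {V : Type*} (E : Set (V × ℕ × V)) : V → List (V × ℕ × V) → V → Prop
  | u, [], v => u = v
  | u, e :: l, v => e ∈ E ∧ e.1 = u ∧ IsFinPath E e.2.2 l v

/-- Even has a winning strategy in the game `g`. -/
def EvenWins {V : Type*} (g : PGame V) : Prop :=
  ∃ str : List (V × ℕ × V) → V × ℕ × V,
    (∀ l v, IsFinPath g.edges g.start l v → g.evenOwn v →
      str l ∈ g.edges ∧ (str l).1 = v) ∧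
    ∀ w, g.IsPlay w → (∀ k, g.evenOwn ((w k).1) → w k = str ((List.range k).map w)) →
      MaxInfOftEven fun k => (w k).2.1

/-- Odd has a winning strategy in the game `g`. -/
def OddWins {V : Type*} (g : PGame V) : Prop :=
  ∃ str : List (V × ℕ × V) → V × ℕ × V,
    (∀ l v, IsFinPath g.edges g.start l v → ¬ g.evenOwn v →
      str l ∈ g.edges ∧ (str l).1 = v) ∧
    ∀ w, g.IsPlay w → (∀ k, ¬ g.evenOwn ((w k).1) → w k = str ((List.range k).map w)) →
      ¬ MaxInfOftEven fun k => (w k).2.1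

/-- Even has a strategy winning for the safety condition `safe` in the game `g`. -/
def EvenWinsSafety {V : Type*} (g : PGame V) (safe : V → Prop) : Prop :=
  ∃ str : List (V × ℕ × V) → V × ℕ × V,
    (∀ l v, IsFinPath g.edges g.start l v → g.evenOwn v →
      str l ∈ g.edges ∧ (str l).1 = v) ∧
    ∀ w, g.IsPlay w → (∀ k, g.evenOwn ((w k).1) → w k = str ((List.range k).map w)) →
      ∀ k, safe (w k).2.2

/-- A game graph viewed as a generic game. -/
def GameGraph.toPGame {n d : ℕ} (G : GameGraph n d) : PGame ℕ :=
  { evenOwn := fun v => v ∈ G.evenN, start := G.start, edges := G.edges }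

/-- The synchronized product `G × A`. -/
def prodGame {n d : ℕ} {Q : Type*} (G : GameGraph n d) (A : Automaton Q) :
    PGame ((ℕ ⊕ Letter) × Q) where
  evenOwn := fun x => match x.1 with
    | Sum.inl v => v ∈ G.evenN
    | Sum.inr _ => True
  start := (Sum.inl G.start, A.init)
  edges := {ed | (∃ e ∈ G.edges, ∃ s : Q, ed = ((Sum.inl e.1, s), 1, (Sum.inr e, s))) ∨
    (∃ t ∈ A.trans, tLetter t ∈ G.edges ∧
      ed = ((Sum.inr (tLetter t), tSrc t), tPrio t, (Sum.inl (tLetter t).2.2, tTgt t)))}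

/-- The number of registers: `rn(n) = 1 + ⌊log₂ n⌋`. -/
def rn (n : ℕ) : ℕ := 1 + Nat.log 2 n

/-- Update of a register state (bottom register first) by priority `p`:
the maximal prefix of registers smaller than `p` is replaced by `p`. -/
def update (p : ℕ) : List ℕ → List ℕ
  | [] => []
  | r :: l => if r < p then p :: update p l else r :: l

/-- The `k`-reset (registers numbered from 1, bottom first): the `k`-th register is
removed and a `1` is inserted at the bottom. -/
def resetReg (k : ℕ) (l : List ℕ) : List ℕ := 1 :: l.eraseIdx (k - 1)

/-- The value of register number `k` (registers numbered from 1, bottom first). -/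
def regVal (k : ℕ) (l : List ℕ) : ℕ := l.getD (k - 1) 0

/-- Lehtinen's register automaton `R_{n,d}`. -/
def Raut (n d : ℕ) : Automaton (List ℕ) where
  init := List.replicate (rn n) 1
  trans := {t | ∃ s e, InAlph n d e ∧
    (t = (s, e, 1, update (prio e) s) ∨
     ∃ k, 1 ≤ k ∧ k ≤ rn n ∧
       ((Even (regVal k (update (prio e) s)) ∧
           t = (s, e, 2 * k, resetReg k (update (prio e) s))) ∨
        (Odd (regVal k (update (prio e) s)) ∧
           t = (s, e, 2 * k + 1, resetReg k (update (prio e) s)))))}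

/-- States of the safety automaton `S_{n,d}`: `none` is the rejecting state `rej`;
otherwise a state of `R_{n,d}` together with a tuple of counters (bottom first:
`c_0` is the head). -/
abbrev SState : Type := Option (List ℕ × List ℕ)

/-- Counters `c_0,…,c_{k-1}` are reset to `c0`; the rest is kept. -/
def bumpKeep (c0 k : ℕ) (c : List ℕ) : List ℕ := List.replicate k c0 ++ c.drop k

/-- Counters `c_0,…,c_{k-1}` are reset to `c0`; counter `c_k` is decremented. -/
def bumpDec (c0 k : ℕ) (c : List ℕ) : List ℕ :=
  List.replicate k c0 ++ ((c.getD k 0 - 1) :: c.drop (k + 1))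

/-- The safety automaton `S_{n,d}`. -/
def Saut (n d : ℕ) : Automaton SState where
  init := some (List.replicate (rn n) 1, List.replicate (rn n + 1) n)
  trans := {t |
    (∃ e, InAlph n d e ∧ t = (none, e, 1, none)) ∨
    (∃ s c e k s', 1 ≤ k ∧ (s, e, 2 * k, s') ∈ (Raut n d).trans ∧
       t = (some (s, c), e, 2, some (s', bumpKeep n k c))) ∨
    (∃ s c e k s', (s, e, 2 * k + 1, s') ∈ (Raut n d).trans ∧
       ((1 < c.getD k 0 ∧ t = (some (s, c), e, 2, some (s', bumpDec n k c))) ∨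
        (c.getD k 0 = 1 ∧ t = (some (s, c), e, 1, none))))}

/-- `bad(ρ) ≤ B` for an infinite run `ρ`: every infix containing no transition of
priority above an odd `p` contains at most `B` transitions of priority `p`. -/
def badLE {Q : Type*} (ρ : ℕ → Trans Q) (B : ℕ) : Prop :=
  ∀ a b p, Odd p → (∀ i, a ≤ i → i < b → tPrio (ρ i) ≤ p) →
    ((Finset.Ico a b).filter fun i => tPrio (ρ i) = p).card ≤ B

/-- `bad(ρ) ≤ B` for a partial run of length `L` (possibly infinite). -/
def badLEPartial {Q : Type*} (ρ : ℕ → Trans Q) (L : ℕ∞) (B : ℕ) : Prop :=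
  ∀ (a b p : ℕ), Odd p → (b : ℕ∞) ≤ L → (∀ i, a ≤ i → i < b → tPrio (ρ i) ≤ p) →
    ((Finset.Ico a b).filter fun i => tPrio (ρ i) = p).card ≤ B

/-- The strategy subgraph `G_τ`: all outgoing edges of Odd's nodes, and only the
chosen edge from each of Even's nodes. -/
def GtauEdges {n d : ℕ} (G : GameGraph n d) (τ : EPosStrat G) : Set Letter :=
  {e | e ∈ G.edges ∧ (e.1 ∈ G.evenN → e = τ.choice e.1)}

/-- One step along an edge of `E`. -/
def StepRel (E : Set Letter) (u v : ℕ) : Prop := ∃ p, (u, p, v) ∈ E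

/-- Reachability along edges of `E`. -/
def Reach (E : Set Letter) : ℕ → ℕ → Prop := Relation.ReflTransGen (StepRel E)

/-- `V_τ`: the nodes of `G_τ` reachable from the starting node. -/
def Vtau {n d : ℕ} (G : GameGraph n d) (τ : EPosStrat G) : Set ℕ :=
  {v | Reach (GtauEdges G τ) G.start v}

/-- `G_{S,p}`: edges of `E` inside `S` of priority at most `p`. -/
def subEdges (E : Set Letter) (S : Set ℕ) (p : ℕ) : Set Letter :=
  {e | e ∈ E ∧ e.1 ∈ S ∧ e.2.2 ∈ S ∧ prio e ≤ p}

/-- `parts` lists the strongly connected components of the graph `(S, E)` in a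
topological order. -/
def IsSCCDecomp (E : Set Letter) (S : Set ℕ) (parts : List (Set ℕ)) : Prop :=
  (∀ P ∈ parts, P.Nonempty ∧ P ⊆ S) ∧
  (∀ v ∈ S, ∃ P ∈ parts, v ∈ P) ∧
  List.Pairwise Disjoint parts ∧
  (∀ P ∈ parts, ∀ u ∈ P, ∀ v ∈ S, ((Reach E u v ∧ Reach E v u) ↔ v ∈ P)) ∧
  (∀ (i j : ℕ) (hi : i < parts.length) (hj : j < parts.length), i < j →
    ∀ u ∈ parts.get ⟨j, hj⟩, ∀ v ∈ parts.get ⟨i, hi⟩, ¬ StepRel E u v)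

/-- The nodes of a tree given by the children function `ch` with root `(r, R)`. -/
inductive TreeNode (ch : ℕ → Set ℕ → List (Set ℕ)) (r : ℕ) (R : Set ℕ) :
    ℕ → Set ℕ → Prop where
  | root : TreeNode ch r R r R
  | child {k : ℕ} {S T : Set ℕ} : TreeNode ch r R (k + 1) S → T ∈ ch (k + 1) S →
      TreeNode ch r R k T

/-- `ch` describes a game tree of `G_τ`: the root is `(⌈d/2⌉, V_τ)`, and the children
of a node `(k+1, S)` are the SCCs of `G_{S,2(k+1)-1}` in topological order. -/
def IsGameTree {n d : ℕ} (G : GameGraph n d) (τ : EPosStrat G)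
    (ch : ℕ → Set ℕ → List (Set ℕ)) : Prop :=
  ∀ k S, TreeNode ch ((d + 1) / 2) (Vtau G τ) (k + 1) S →
    IsSCCDecomp (subEdges (GtauEdges G τ) S (2 * (k + 1) - 1)) S (ch (k + 1) S)

/-- `fstl ch l k S`: the leftmost descendant of the node `(k, S)` on level `l`
(for `l ≤ k`). -/
def fstl (ch : ℕ → Set ℕ → List (Set ℕ)) (l : ℕ) : ℕ → Set ℕ → Set ℕ
  | 0, S => S
  | k + 1, S => if l = k + 1 then S else fstl ch l k ((ch (k + 1) S).headD ∅)


section NotGFGAux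

open List

/-! ### Generic helpers about `InfOft` and stabilizing sequences -/

private lemma chain_le_of_succ_le (f : ℕ → ℕ) (N : ℕ) (h : ∀ i, N ≤ i → f (i+1) ≤ f i) :
    ∀ i, N ≤ i → f i ≤ f N := by
  intro i hi
  induction i, hi using Nat.le_induction with
  | base => exact le_rfl
  | succ i hi ih => exact le_trans (h i hi) ih

private lemma stabilizes_aux : ∀ (b : ℕ) (f : ℕ → ℕ) (N : ℕ),
    (∀ i, N ≤ i → f (i+1) ≤ f i) → f N ≤ b →
    ∃ T, N ≤ T ∧ ∀ i, T ≤ i → f i = f T := by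
  intro b
  induction b with
  | zero =>
    intro f N h hb
    refine ⟨N, le_rfl, fun i hi => ?_⟩
    have := chain_le_of_succ_le f N h i hi
    omega
  | succ b ih =>
    intro f N h hb
    by_cases hc : ∃ i, N ≤ i ∧ f i < f N
    · obtain ⟨i, hiN, hlt⟩ := hc
      obtain ⟨T, hT, hTT⟩ := ih f i (fun j hj => h j (le_trans hiN hj)) (by omega)
      exact ⟨T, le_trans hiN hT, hTT⟩
    · push_neg at hc
      exact ⟨N, le_rfl, fun i hi =>
        le_antisymm (chain_le_of_succ_le f N h i hi) (hc i hi)⟩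

private lemma stabilizes (f : ℕ → ℕ) (N : ℕ) (h : ∀ i, N ≤ i → f (i+1) ≤ f i) :
    ∃ T, N ≤ T ∧ ∀ i, T ≤ i → f i = f T :=
  stabilizes_aux (f N) f N h le_rfl

private lemma infOft_le_of_bdd {f : ℕ → ℕ} {v B : ℕ} (hB : ∀ i, f i ≤ B)
    (h : InfOft f v) : v ≤ B := by
  obtain ⟨k, -, hk⟩ := h 0
  have := hB k
  omega

private lemma not_infOft_bound {f : ℕ → ℕ} {v : ℕ} (h : ¬ InfOft f v) :
    ∃ N, ∀ k, N ≤ k → f k ≠ v := by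
  unfold InfOft at h
  push_neg at h
  exact h

private lemma eventually_le_max (f : ℕ → ℕ) (B M : ℕ) (hB : ∀ i, f i ≤ B)
    (hM : ∀ q, InfOft f q → q ≤ M) : ∃ T, ∀ i, T ≤ i → f i ≤ M := by
  have h2 : ∀ v, ∃ N, (M < v → ∀ k, N ≤ k → f k ≠ v) := by
    intro v
    by_cases hv : M < v
    · obtain ⟨N, hN⟩ := not_infOft_bound (f := f) (v := v)
        (fun hi => absurd (hM v hi) (by omega))
      exact ⟨N, fun _ => hN⟩
    · exact ⟨0, fun h => absurd h hv⟩
  choose Nf hN using h2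
  refine ⟨(Finset.range (B+1)).sup Nf, fun i hi => ?_⟩
  by_contra hlt
  push_neg at hlt
  have hfi : f i ≤ B := hB i
  have hle : Nf (f i) ≤ (Finset.range (B+1)).sup Nf :=
    Finset.le_sup (Finset.mem_range.mpr (by omega))
  exact hN (f i) hlt i (le_trans hle hi) rfl

private lemma exists_infOft (f : ℕ → ℕ) (B : ℕ) (hB : ∀ i, f i ≤ B) :
    ∃ v, InfOft f v := by
  by_contra hno
  push_neg at hno
  have h2 : ∀ v, ∃ N, ∀ k, N ≤ k → f k ≠ v := fun v => not_infOft_bound (hno v)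
  choose Nf hN using h2
  set T := (Finset.range (B+1)).sup Nf with hT
  have hfi : f T ≤ B := hB T
  have hle : Nf (f T) ≤ T := Finset.le_sup (Finset.mem_range.mpr (by omega))
  exact hN (f T) T hle rfl

private lemma exists_maxInfOft (f : ℕ → ℕ) (B : ℕ) (hB : ∀ i, f i ≤ B) :
    ∃ M, InfOft f M ∧ ∀ q, InfOft f q → q ≤ M := by
  classical
  obtain ⟨v, hv⟩ := exists_infOft f B hB
  exact ⟨Nat.findGreatest (InfOft f) B,
    Nat.findGreatest_spec (infOft_le_of_bdd hB hv) hv,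
    fun q hq => Nat.le_findGreatest (infOft_le_of_bdd hB hq) hq⟩

/-! ### List lemmas -/

private lemma getD_map_lt (f : ℕ → ℕ) (l : List ℕ) {i : ℕ} (h : i < l.length) :
    (l.map f).getD i 0 = f (l.getD i 0) := by
  rw [List.getD_eq_getElem _ _ (by simpa using h), List.getD_eq_getElem _ _ h,
    List.getElem_map]

private lemma sorted_getD_le {l : List ℕ} (hs : List.Pairwise (· ≤ ·) l) {i j : ℕ}
    (hij : i ≤ j) (hj : j < l.length) : l.getD i 0 ≤ l.getD j 0 := by
  have hi : i < l.length := lt_of_le_of_lt hij hj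
  rw [List.getD_eq_getElem _ _ hi, List.getD_eq_getElem _ _ hj]
  exact hs.rel_get_of_le (show (⟨i, hi⟩ : Fin l.length) ≤ ⟨j, hj⟩ from hij)

private lemma countP_eraseIdx (p : ℕ → Bool) (l : List ℕ) {m : ℕ} (hm : m < l.length) :
    List.countP p l = List.countP p (l.eraseIdx m) + (if p l[m] then 1 else 0) := by
  conv_lhs => rw [← List.take_append_drop m l]
  rw [List.eraseIdx_eq_take_drop_succ, List.countP_append, List.countP_append,
    show List.drop m l = l[m] :: List.drop (m+1) l from (List.getElem_cons_drop hm).symm,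
    List.countP_cons]
  split <;> omega

end NotGFGAux

section NotGFGAux2

open List

private lemma update_eq_map {s : List ℕ} (hs : List.Pairwise (· ≤ ·) s) (p : ℕ) :
    update p s = s.map (fun x => if x < p then p else x) := by
  induction s with
  | nil => rfl
  | cons r l ih =>
    rw [List.pairwise_cons] at hs
    by_cases h : r < p
    · simp only [update, if_pos h, List.map_cons, ih hs.2]
    · have hmap : l.map (fun x => if x < p then p else x) = l := by
        have : ∀ x ∈ l, (if x < p then p else x) = id x := by
          intro x hx
          have := hs.1 x hx
          simp only [id]
          rw [if_neg (by omega)]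
        rw [List.map_congr_left this, List.map_id]
      simp only [update, if_neg h, List.map_cons, if_neg h, hmap]

private lemma length_update (p : ℕ) (s : List ℕ) : (update p s).length = s.length := by
  induction s with
  | nil => rfl
  | cons r l ih =>
    by_cases h : r < p <;> simp [update, h, ih]

private lemma sorted_update {s : List ℕ} (hs : List.Pairwise (· ≤ ·) s) (p : ℕ) :
    List.Pairwise (· ≤ ·) (update p s) := by
  rw [update_eq_map hs]
  refine List.pairwise_map.2 (hs.imp ?_)
  intro a b hab
  split <;> split <;> omega

private lemma mem_update {s : List ℕ} (hs : List.Pairwise (· ≤ ·) s) {p x : ℕ}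
    (hx : x ∈ update p s) : x = p ∨ x ∈ s := by
  rw [update_eq_map hs] at hx
  obtain ⟨y, hy, hyx⟩ := List.mem_map.1 hx
  by_cases h : y < p
  · left; rw [if_pos h] at hyx; omega
  · right; rw [if_neg h] at hyx; rwa [← hyx]

private lemma update_getD_ge {s : List ℕ} (hs : List.Pairwise (· ≤ ·) s) (p : ℕ) {i : ℕ}
    (hi : i < s.length) : s.getD i 0 ≤ (update p s).getD i 0 := by
  rw [update_eq_map hs, getD_map_lt _ _ hi]
  split <;> omega

private lemma update_all_ge {s : List ℕ} (hs : List.Pairwise (· ≤ ·) s) (p : ℕ) :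
    ∀ x ∈ update p s, p ≤ x := by
  intro x hx
  rw [update_eq_map hs] at hx
  obtain ⟨y, hy, hyx⟩ := List.mem_map.1 hx
  by_cases h : y < p
  · rw [if_pos h] at hyx; omega
  · rw [if_neg h] at hyx; omega

private lemma length_resetReg {k : ℕ} {l : List ℕ} (h1 : 1 ≤ k) (h2 : k ≤ l.length) :
    (resetReg k l).length = l.length := by
  simp only [resetReg, List.length_cons, List.length_eraseIdx]
  rw [if_pos (by omega)]
  omega

private lemma sorted_resetReg {k : ℕ} {l : List ℕ} (hs : List.Pairwise (· ≤ ·) l)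
    (h1 : ∀ x ∈ l, 1 ≤ x) : List.Pairwise (· ≤ ·) (resetReg k l) := by
  unfold resetReg
  rw [List.pairwise_cons]
  exact ⟨fun x hx => h1 x ((l.eraseIdx_sublist (k-1)).subset hx),
    hs.sublist (l.eraseIdx_sublist (k-1))⟩

private lemma mem_resetReg {k : ℕ} {l : List ℕ} {x : ℕ} (hx : x ∈ resetReg k l) :
    x = 1 ∨ x ∈ l := by
  unfold resetReg at hx
  rcases List.mem_cons.1 hx with h | h
  · exact Or.inl h
  · exact Or.inr ((l.eraseIdx_sublist (k-1)).subset h)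

private lemma regVal_resetReg_high {k K : ℕ} {l : List ℕ} (hk : 1 ≤ k) (hkK : k < K)
    (hK : K ≤ l.length) : regVal K (resetReg k l) = regVal K l := by
  unfold resetReg regVal
  have h2 : K - 1 = (K - 2) + 1 := by omega
  rw [h2, List.getD_cons_succ]
  have hlen : K - 2 < (l.eraseIdx (k-1)).length := by
    rw [List.length_eraseIdx, if_pos (by omega)]
    omega
  rw [List.getD_eq_getElem _ _ hlen, List.getElem_eraseIdx,
    dif_neg (show ¬ (K - 2 < k - 1) by omega)]
  rw [List.getD_eq_getElem _ _ (show K - 2 + 1 < l.length by omega)]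

private lemma regVal_ge_of_all {K : ℕ} {l : List ℕ} {c : ℕ} (h : ∀ x ∈ l, c ≤ x)
    (h1 : 1 ≤ K) (h2 : K ≤ l.length) : c ≤ regVal K l := by
  unfold regVal
  rw [List.getD_eq_getElem _ _ (show K - 1 < l.length by omega)]
  exact h _ (List.getElem_mem _)

/-- the state invariant along runs of `Raut` -/
private def SInv (n : ℕ) (s : List ℕ) : Prop :=
  List.Pairwise (· ≤ ·) s ∧ s.length = rn n ∧ ∀ x ∈ s, 1 ≤ x

private lemma rn_pos (n : ℕ) : 1 ≤ rn n := by
  unfold rn; omega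

private lemma SInv_init (n d : ℕ) : SInv n (Raut n d).init := by
  refine ⟨List.pairwise_replicate.2 (Or.inr le_rfl), by simp [Raut], ?_⟩
  intro x hx
  have := List.eq_of_mem_replicate hx
  omega

private lemma SInv_update {n : ℕ} {s : List ℕ} (h : SInv n s) {p : ℕ} (hp : 1 ≤ p) :
    SInv n (update p s) := by
  obtain ⟨hs, hl, hv⟩ := h
  refine ⟨sorted_update hs p, by rw [length_update]; exact hl, ?_⟩
  intro x hx
  rcases mem_update hs hx with rfl | hx
  · exact hp
  · exact hv x hx

private lemma SInv_resetReg {n : ℕ} {s : List ℕ} (h : SInv n s) {k : ℕ} (hk : 1 ≤ k)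
    (hk2 : k ≤ rn n) : SInv n (resetReg k s) := by
  obtain ⟨hs, hl, hv⟩ := h
  refine ⟨sorted_resetReg hs hv, by rw [length_resetReg hk (by omega)]; exact hl, ?_⟩
  intro x hx
  rcases mem_resetReg hx with rfl | hx
  · exact le_rfl
  · exact hv x hx

end NotGFGAux2

section NotGFGAux3

open List

private lemma raut_trans_cases {n d : ℕ} {s s' : List ℕ} {e : Letter} {p : ℕ}
    (h : (s, e, p, s') ∈ (Raut n d).trans) :
    (p = 1 ∧ s' = update (prio e) s) ∨
      ∃ k, 1 ≤ k ∧ k ≤ rn n ∧ s' = resetReg k (update (prio e) s) ∧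
        ((Even (regVal k (update (prio e) s)) ∧ p = 2 * k) ∨
         (Odd (regVal k (update (prio e) s)) ∧ p = 2 * k + 1)) := by
  obtain ⟨s0, e0, -, h⟩ := h
  rcases h with h | ⟨k, hk1, hk2, ⟨hev, h⟩ | ⟨hod, h⟩⟩
  · simp only [Prod.mk.injEq] at h
    obtain ⟨rfl, rfl, h1, rfl⟩ := h
    exact Or.inl ⟨h1, rfl⟩
  · simp only [Prod.mk.injEq] at h
    obtain ⟨rfl, rfl, h1, rfl⟩ := h
    exact Or.inr ⟨k, hk1, hk2, rfl, Or.inl ⟨hev, h1⟩⟩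
  · simp only [Prod.mk.injEq] at h
    obtain ⟨rfl, rfl, h1, rfl⟩ := h
    exact Or.inr ⟨k, hk1, hk2, rfl, Or.inr ⟨hod, h1⟩⟩

private lemma stateAt_congr {n d : ℕ} {Q : Type*} (A : Automaton Q)
    (σ : TransStrat n d A) (w w' : Word) :
    ∀ k, (∀ i, i < k → w i = w' i) → stateAt A σ w k = stateAt A σ w' k := by
  intro k
  induction k with
  | zero => intro _; rfl
  | succ k ih =>
    intro h
    have hm : (List.range k).map w = (List.range k).map w' :=
      List.map_congr_left (fun i hi => h i (by simpa using Nat.lt_succ_of_lt (List.mem_range.1 hi)))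
    simp only [stateAt, hm, ih (fun i hi => h i (by omega)), h k (by omega)]

private lemma followRun_congr {n d : ℕ} {Q : Type*} (A : Automaton Q)
    (σ : TransStrat n d A) (w w' : Word) (k : ℕ) (h : ∀ i, i ≤ k → w i = w' i) :
    followRun A σ w k = followRun A σ w' k := by
  unfold followRun
  rw [stateAt_congr A σ w w' k (fun i hi => h i (by omega)),
    List.map_congr_left (fun i hi => h i (by have := List.mem_range.1 hi; omega)),
    h k le_rfl]

/-- the priority played by the adversary in response to a run priority -/
private def advG (p : ℕ) : ℕ := if p = 1 then 2 else p + 1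

/-- the priorities of the adversary word against strategy `σ` -/
private def advPr (n d : ℕ) (σ : TransStrat n d (Raut n d)) : ℕ → ℕ
  | 0 => 2
  | k + 1 =>
      advG (tPrio (followRun (Raut n d) σ
        (fun i => (1, if _h : i < k + 1 then advPr n d σ i else 2, 1)) k))
  termination_by k => k
  decreasing_by exact _h

/-- the adversary word against strategy `σ` -/
private def advW (n d : ℕ) (σ : TransStrat n d (Raut n d)) : Word :=
  fun i => (1, advPr n d σ i, 1)

private lemma advPr_succ (n d : ℕ) (σ : TransStrat n d (Raut n d)) (k : ℕ) :
    advPr n d σ (k+1) = advG (tPrio (followRun (Raut n d) σ (advW n d σ) k)) := by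
  rw [advPr]
  congr 2
  apply followRun_congr
  intro i hi
  simp only [advW]
  rw [dif_pos (Nat.lt_succ_of_le hi)]

/-- the priorities emitted by the run of `σ` on the adversary word -/
private def emE (n d : ℕ) (σ : TransStrat n d (Raut n d)) (k : ℕ) : ℕ :=
  tPrio (followRun (Raut n d) σ (advW n d σ) k)

/-- the states of the run of `σ` on the adversary word -/
private def ssE (n d : ℕ) (σ : TransStrat n d (Raut n d)) (k : ℕ) : List ℕ :=
  stateAt (Raut n d) σ (advW n d σ) k

private lemma char_core {n d : ℕ} (σ : TransStrat n d (Raut n d)) (hn : 1 ≤ n)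
    (hd : 2 * rn n + 2 ≤ d) {k : ℕ}
    (hb : 2 ≤ advPr n d σ k ∧ advPr n d σ k ≤ 2 * rn n + 2) :
    (emE n d σ k = 1 ∧ ssE n d σ (k+1) = update (advPr n d σ k) (ssE n d σ k)) ∨
      ∃ j, 1 ≤ j ∧ j ≤ rn n ∧
        ssE n d σ (k+1) = resetReg j (update (advPr n d σ k) (ssE n d σ k)) ∧
        ((Even (regVal j (update (advPr n d σ k) (ssE n d σ k))) ∧ emE n d σ k = 2 * j) ∨
         (Odd (regVal j (update (advPr n d σ k) (ssE n d σ k))) ∧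
           emE n d σ k = 2 * j + 1)) := by
  have hal : InAlph n d (advW n d σ k) :=
    ⟨le_rfl, hn, by simp only [advW]; omega, by simp only [advW]; omega, le_rfl, hn⟩
  obtain ⟨htr, hsrc, hlet⟩ :=
    σ.valid ((List.range k).map (advW n d σ)) (ssE n d σ k) (advW n d σ k) hal
  have heq : σ.app ((List.range k).map (advW n d σ)) (ssE n d σ k) (advW n d σ k)
      = followRun (Raut n d) σ (advW n d σ) k := rfl
  rw [heq] at htr hsrc hlet
  set t := followRun (Raut n d) σ (advW n d σ) k with ht
  have hteq : t = (ssE n d σ k, advW n d σ k, emE n d σ k, ssE n d σ (k+1)) := by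
    have h1 : t.1 = ssE n d σ k := hsrc
    have h2 : t.2.1 = advW n d σ k := hlet
    have h4 : ssE n d σ (k+1) = t.2.2.2 := rfl
    rw [← h1, ← h2, h4]
    rfl
  rw [hteq] at htr
  have := raut_trans_cases htr
  simpa only [show prio (advW n d σ k) = advPr n d σ k from rfl] using this

private lemma advPr_bounds {n d : ℕ} (σ : TransStrat n d (Raut n d)) (hn : 1 ≤ n)
    (hd : 2 * rn n + 2 ≤ d) :
    ∀ k, 2 ≤ advPr n d σ k ∧ advPr n d σ k ≤ 2 * rn n + 2 := by
  intro k
  induction k with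
  | zero =>
    constructor
    · rw [advPr]
    · rw [advPr]; have := rn_pos n; omega
  | succ k ih =>
    have hc := char_core σ hn hd ih
    have hem : 1 ≤ emE n d σ k ∧ emE n d σ k ≤ 2 * rn n + 1 := by
      rcases hc with ⟨h1, -⟩ | ⟨j, hj1, hj2, -, ⟨-, h⟩ | ⟨-, h⟩⟩ <;> omega
    rw [advPr_succ]
    show 2 ≤ advG (emE n d σ k) ∧ advG (emE n d σ k) ≤ 2 * rn n + 2
    unfold advG
    split <;> omega

private lemma emE_char {n d : ℕ} (σ : TransStrat n d (Raut n d)) (hn : 1 ≤ n)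
    (hd : 2 * rn n + 2 ≤ d) (k : ℕ) :
    (emE n d σ k = 1 ∧ ssE n d σ (k+1) = update (advPr n d σ k) (ssE n d σ k)) ∨
      ∃ j, 1 ≤ j ∧ j ≤ rn n ∧
        ssE n d σ (k+1) = resetReg j (update (advPr n d σ k) (ssE n d σ k)) ∧
        ((Even (regVal j (update (advPr n d σ k) (ssE n d σ k))) ∧ emE n d σ k = 2 * j) ∨
         (Odd (regVal j (update (advPr n d σ k) (ssE n d σ k))) ∧
           emE n d σ k = 2 * j + 1)) :=
  char_core σ hn hd (advPr_bounds σ hn hd k)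

private lemma emE_bounds {n d : ℕ} (σ : TransStrat n d (Raut n d)) (hn : 1 ≤ n)
    (hd : 2 * rn n + 2 ≤ d) (k : ℕ) :
    1 ≤ emE n d σ k ∧ emE n d σ k ≤ 2 * rn n + 1 := by
  rcases emE_char σ hn hd k with ⟨h1, -⟩ | ⟨j, hj1, hj2, -, ⟨-, h⟩ | ⟨-, h⟩⟩ <;> omega

private lemma SInv_ssE {n d : ℕ} (σ : TransStrat n d (Raut n d)) (hn : 1 ≤ n)
    (hd : 2 * rn n + 2 ≤ d) : ∀ k, SInv n (ssE n d σ k) := by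
  intro k
  induction k with
  | zero => exact SInv_init n d
  | succ k ih =>
    have hb := advPr_bounds σ hn hd k
    rcases emE_char σ hn hd k with ⟨-, h⟩ | ⟨j, hj1, hj2, h, -⟩
    · rw [h]; exact SInv_update ih (by omega)
    · rw [h]
      exact SInv_resetReg (SInv_update ih (by omega)) hj1 hj2

private lemma advPr_succ_le {n d : ℕ} (σ : TransStrat n d (Raut n d)) {m : ℕ} (k : ℕ)
    (h : emE n d σ k ≤ m) (hm : 1 ≤ m) : advPr n d σ (k+1) ≤ m + 1 := by
  rw [advPr_succ]
  show advG (emE n d σ k) ≤ m + 1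
  unfold advG
  split <;> omega

end NotGFGAux3

section NotGFGAux4

open List

private lemma countP_update_small {s : List ℕ} (hs : List.Pairwise (· ≤ ·) s) {p' c : ℕ}
    (hp : p' < c) :
    List.countP (fun x => decide (c ≤ x)) (update p' s)
      = List.countP (fun x => decide (c ≤ x)) s := by
  rw [update_eq_map hs, List.countP_map]
  apply List.countP_congr
  intro x hx
  simp only [Function.comp_apply, decide_eq_true_eq]
  by_cases h : x < p'
  · rw [if_pos h]; constructor <;> intro <;> omega
  · rw [if_neg h]

private lemma countP_resetReg_eq {c k : ℕ} {l : List ℕ} (hc : 2 ≤ c) (hk1 : 1 ≤ k)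
    (hk2 : k ≤ l.length) :
    List.countP (fun x => decide (c ≤ x)) (resetReg k l)
        + (if c ≤ regVal k l then 1 else 0)
      = List.countP (fun x => decide (c ≤ x)) l := by
  have hkl : k - 1 < l.length := by omega
  have hreg : regVal k l = l[k-1] := List.getD_eq_getElem _ _ hkl
  rw [countP_eraseIdx (fun x => decide (c ≤ x)) l hkl]
  unfold resetReg
  rw [List.countP_cons]
  simp only [hreg, decide_eq_true_eq]
  rw [if_neg (show ¬ c ≤ 1 by omega)]
  omega

private lemma adv_rejects {n d : ℕ} (σ : TransStrat n d (Raut n d)) (hn : 1 ≤ n)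
    (hd : 2 * rn n + 2 ≤ d) :
    ¬ Accepting (followRun (Raut n d) σ (advW n d σ)) := by
  intro hacc
  obtain ⟨p, hpe, hpio0, hpmax0⟩ := hacc
  have hpio : InfOft (emE n d σ) p := hpio0
  have hpmax : ∀ q, InfOft (emE n d σ) q → q ≤ p := hpmax0
  obtain ⟨K, hK1, hKrn, rfl⟩ : ∃ K, 1 ≤ K ∧ K ≤ rn n ∧ p = 2 * K := by
    obtain ⟨k0, -, hk0⟩ := hpio 0
    rw [Nat.even_iff] at hpe
    rcases emE_char σ hn hd k0 with ⟨h1, -⟩ | ⟨j, hj1, hj2, -, ⟨-, h⟩ | ⟨-, h⟩⟩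
    · exfalso; rw [← hk0] at hpe; rw [h1] at hpe; omega
    · exact ⟨j, hj1, hj2, by omega⟩
    · exfalso; rw [← hk0] at hpe; rw [h] at hpe; omega
  have hbd : ∀ i, emE n d σ i ≤ 2 * rn n + 1 := fun i => (emE_bounds σ hn hd i).2
  obtain ⟨T, hT⟩ := eventually_le_max (emE n d σ) (2*rn n+1) (2*K) hbd hpmax
  have hlet : ∀ i, T + 1 ≤ i → advPr n d σ i ≤ 2*K+1 := by
    intro i hi
    obtain ⟨i', rfl⟩ : ∃ i', i = i' + 1 := ⟨i - 1, by omega⟩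
    exact advPr_succ_le σ i' (hT i' (by omega)) (by omega)
  let tok : ℕ → ℕ :=
    fun i => List.countP (fun x => decide (2*K+2 ≤ x)) (ssE n d σ i)
  have htokdef : ∀ i, tok i = List.countP (fun x => decide (2*K+2 ≤ x)) (ssE n d σ i) :=
    fun _ => rfl
  have hulen : ∀ i, (update (advPr n d σ i) (ssE n d σ i)).length = rn n := by
    intro i
    rw [length_update]
    exact (SInv_ssE σ hn hd i).2.1
  have htoku : ∀ i, T + 1 ≤ i →
      List.countP (fun x => decide (2*K+2 ≤ x)) (update (advPr n d σ i) (ssE n d σ i))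
        = tok i := by
    intro i hi
    exact countP_update_small (SInv_ssE σ hn hd i).1 (by have := hlet i hi; omega)
  have htokle : ∀ i, T + 1 ≤ i → tok (i+1) ≤ tok i := by
    intro i hi
    rcases emE_char σ hn hd i with ⟨-, h⟩ | ⟨j, hj1, hj2, h, -⟩
    · rw [htokdef (i+1), h]
      exact le_of_eq (htoku i hi)
    · have heq2 := countP_resetReg_eq (c := 2*K+2) (l := update (advPr n d σ i) (ssE n d σ i))
        (by omega) hj1 (by rw [hulen i]; omega)
      rw [htoku i hi] at heq2
      rw [htokdef (i+1), h]
      omega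
  obtain ⟨T2, hT2ge, hT2c⟩ := stabilizes tok (T+1) htokle
  have hnobig : ∀ i, T2 ≤ i → ∀ j, 1 ≤ j → j ≤ rn n →
      ssE n d σ (i+1) = resetReg j (update (advPr n d σ i) (ssE n d σ i)) →
      regVal j (update (advPr n d σ i) (ssE n d σ i)) ≤ 2*K+1 := by
    intro i hi j hj1 hj2 hsh
    by_contra hbig
    push_neg at hbig
    have heq := countP_resetReg_eq (c := 2*K+2)
      (l := update (advPr n d σ i) (ssE n d σ i)) (by omega) hj1 (by rw [hulen i]; omega)
    rw [htoku i (by omega), if_pos (by omega :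
      2*K+2 ≤ regVal j (update (advPr n d σ i) (ssE n d σ i)))] at heq
    have h1 : tok (i+1) = List.countP (fun x => decide (2*K+2 ≤ x))
        (resetReg j (update (advPr n d σ i) (ssE n d σ i))) := by
      rw [htokdef (i+1), hsh]
    have e1 : tok i = tok T2 := hT2c i hi
    have e2 : tok (i+1) = tok T2 := hT2c (i+1) (by omega)
    omega
  obtain ⟨i0, hi0ge, hi0⟩ := hpio T2
  have hi0' : emE n d σ i0 = 2*K := hi0
  set t0 := i0 + 1 with ht0
  have ht0T2 : T2 ≤ t0 := by omega
  have hlt0 : advPr n d σ t0 = 2*K+1 := by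
    rw [ht0, advPr_succ]
    show advG (emE n d σ i0) = 2*K+1
    rw [hi0']
    unfold advG
    rw [if_neg (by omega)]
  have hINV : ∀ m, 2*K+1 ≤ regVal K (ssE n d σ (t0 + 1 + m)) := by
    intro m
    induction m with
    | zero =>
      have hall : ∀ x ∈ update (advPr n d σ t0) (ssE n d σ t0), 2*K+1 ≤ x := by
        rw [hlt0]
        exact update_all_ge (SInv_ssE σ hn hd t0).1 (2*K+1)
      have hregK : 2*K+1 ≤ regVal K (update (advPr n d σ t0) (ssE n d σ t0)) :=
        regVal_ge_of_all hall hK1 (by rw [hulen t0]; omega)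
      rcases emE_char σ hn hd t0 with ⟨-, h⟩ | ⟨j, hj1, hj2, h, hpar⟩
      · show 2*K+1 ≤ regVal K (ssE n d σ (t0+1))
        rw [h]; exact hregK
      · have hv : 2*K+1 ≤ regVal j (update (advPr n d σ t0) (ssE n d σ t0)) :=
          regVal_ge_of_all hall hj1 (by rw [hulen t0]; omega)
        have hvs : regVal j (update (advPr n d σ t0) (ssE n d σ t0)) ≤ 2*K+1 :=
          hnobig t0 ht0T2 j hj1 hj2 h
        have hjK : j < K := by
          rcases hpar with ⟨hev, hem⟩ | ⟨hod, hem⟩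
          · rw [Nat.even_iff] at hev; omega
          · have := hT t0 (by omega)
            omega
        show 2*K+1 ≤ regVal K (ssE n d σ (t0+1))
        rw [h, regVal_resetReg_high hj1 hjK (by rw [hulen t0]; omega)]
        exact hregK
    | succ m ih =>
      set t := t0 + 1 + m with htdef
      have htT : T + 1 ≤ t := by omega
      have hsinv := SInv_ssE σ hn hd t
      have hsu : List.Pairwise (· ≤ ·) (update (advPr n d σ t) (ssE n d σ t)) :=
        sorted_update hsinv.1 _
      have hregK : 2*K+1 ≤ regVal K (update (advPr n d σ t) (ssE n d σ t)) := by
        refine le_trans ih ?_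
        unfold regVal
        exact update_getD_ge hsinv.1 _ (by rw [hsinv.2.1]; omega)
      rcases emE_char σ hn hd t with ⟨-, h⟩ | ⟨j, hj1, hj2, h, hpar⟩
      · show 2*K+1 ≤ regVal K (ssE n d σ (t+1))
        rw [h]; exact hregK
      · have hjK : j < K := by
          by_contra hge
          push_neg at hge
          have hv : 2*K+1 ≤ regVal j (update (advPr n d σ t) (ssE n d σ t)) := by
            refine le_trans hregK ?_
            unfold regVal
            exact sorted_getD_le hsu (by omega) (by rw [hulen t]; omega)
          have hvs : regVal j (update (advPr n d σ t) (ssE n d σ t)) ≤ 2*K+1 :=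
            hnobig t (by omega) j hj1 hj2 h
          rcases hpar with ⟨hev, hem⟩ | ⟨hod, hem⟩
          · rw [Nat.even_iff] at hev; omega
          · have := hT t (by omega)
            omega
        show 2*K+1 ≤ regVal K (ssE n d σ (t+1))
        rw [h, regVal_resetReg_high hj1 hjK (by rw [hulen t]; omega)]
        exact hregK
  obtain ⟨i1, hi1ge, hi1⟩ := hpio (t0+1)
  have hi1' : emE n d σ i1 = 2*K := hi1
  have hssK : 2*K+1 ≤ regVal K (ssE n d σ i1) := by
    have : i1 = t0 + 1 + (i1 - (t0+1)) := by omega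
    rw [this]
    exact hINV _
  rcases emE_char σ hn hd i1 with ⟨h1, -⟩ | ⟨j, hj1, hj2, h, hpar⟩
  · omega
  · have hjK : j = K := by
      rcases hpar with ⟨-, hem⟩ | ⟨hod, hem⟩
      · omega
      · rw [Nat.odd_iff] at hod; omega
    have hssj : 2*K+1 ≤ regVal j (ssE n d σ i1) := by rw [hjK]; exact hssK
    have hregK : 2*K+1 ≤ regVal j (update (advPr n d σ i1) (ssE n d σ i1)) := by
      refine le_trans hssj ?_
      unfold regVal
      exact update_getD_ge (SInv_ssE σ hn hd i1).1 _
        (by rw [(SInv_ssE σ hn hd i1).2.1]; omega)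
    have hvs : regVal j (update (advPr n d σ i1) (ssE n d σ i1)) ≤ 2*K+1 :=
      hnobig i1 (by omega) j hj1 hj2 h
    rcases hpar with ⟨hev, -⟩ | ⟨hod, hem⟩
    · rw [Nat.even_iff] at hev; omega
    · omega

end NotGFGAux4

section NotGFGAux5

open List

private def memStep (n T E : ℕ) (pf : ℕ → ℕ) (k : ℕ) (s : List ℕ) : List ℕ :=
  if T ≤ k ∧ pf k = E then resetReg (rn n) (update (pf k) s) else update (pf k) s

private def memQ (n d T E : ℕ) (pf : ℕ → ℕ) : ℕ → List ℕ
  | 0 => (Raut n d).init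
  | k+1 => memStep n T E pf k (memQ n d T E pf k)

private def memPe (n d T E : ℕ) (pf : ℕ → ℕ) (k : ℕ) : ℕ :=
  if T ≤ k ∧ pf k = E then
    (if Even (regVal (rn n) (update (pf k) (memQ n d T E pf k))) then 2 * rn n
     else 2 * rn n + 1)
  else 1

private def memRho (n d T E : ℕ) (pf : ℕ → ℕ) (k : ℕ) : Trans (List ℕ) :=
  (memQ n d T E pf k, (1, pf k, 1), memPe n d T E pf k, memQ n d T E pf (k+1))

private lemma mem_lang_of_eventually (n d : ℕ) (hn : 1 ≤ n) (pf : ℕ → ℕ)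
    (hpf : ∀ k, 1 ≤ pf k ∧ pf k ≤ d) (E T : ℕ) (hE2 : 2 ≤ E) (hEe : Even E)
    (hTle : ∀ k, T ≤ k → pf k ≤ E) (hIO : InfOft pf E) :
    (fun k => ((1, pf k, 1) : Letter)) ∈ Lang (Raut n d) := by
  classical
  have hal : ∀ k, InAlph n d ((1, pf k, 1) : Letter) :=
    fun k => ⟨le_rfl, hn, (hpf k).1, (hpf k).2, le_rfl, hn⟩
  have hSI : ∀ k, SInv n (memQ n d T E pf k) := by
    intro k
    induction k with
    | zero => exact SInv_init n d
    | succ k ih =>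
      show SInv n (memStep n T E pf k (memQ n d T E pf k))
      unfold memStep
      split
      · exact SInv_resetReg (SInv_update ih (hpf k).1) (rn_pos n) le_rfl
      · exact SInv_update ih (hpf k).1
  have hulen : ∀ k, (update (pf k) (memQ n d T E pf k)).length = rn n := by
    intro k
    rw [length_update]
    exact (hSI k).2.1
  have htr : ∀ k, memRho n d T E pf k ∈ (Raut n d).trans := by
    intro k
    refine ⟨memQ n d T E pf k, (1, pf k, 1), hal k, ?_⟩
    by_cases hc : T ≤ k ∧ pf k = E
    · right
      refine ⟨rn n, rn_pos n, le_rfl, ?_⟩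
      have h2 : memQ n d T E pf (k+1)
          = resetReg (rn n) (update (pf k) (memQ n d T E pf k)) := by
        show memStep n T E pf k _ = _
        unfold memStep
        rw [if_pos hc]
      by_cases hev : Even (regVal (rn n) (update (pf k) (memQ n d T E pf k)))
      · left
        refine ⟨hev, ?_⟩
        have h1 : memPe n d T E pf k = 2 * rn n := by
          unfold memPe
          rw [if_pos hc, if_pos hev]
        show (_, _, memPe n d T E pf k, memQ n d T E pf (k+1)) = _
        rw [h1, h2]
        rfl
      · right
        refine ⟨Nat.not_even_iff_odd.mp hev, ?_⟩
        have h1 : memPe n d T E pf k = 2 * rn n + 1 := by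
          unfold memPe
          rw [if_pos hc, if_neg hev]
        show (_, _, memPe n d T E pf k, memQ n d T E pf (k+1)) = _
        rw [h1, h2]
        rfl
    · left
      have h1 : memPe n d T E pf k = 1 := by
        unfold memPe
        rw [if_neg hc]
      have h2 : memQ n d T E pf (k+1) = update (pf k) (memQ n d T E pf k) := by
        show memStep n T E pf k _ = _
        unfold memStep
        rw [if_neg hc]
      show (_, _, memPe n d T E pf k, memQ n d T E pf (k+1)) = _
      rw [h1, h2]
      rfl
  have hrun : IsRun (Raut n d) (memRho n d T E pf) := ⟨rfl, fun k => ⟨htr k, rfl⟩⟩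
  have hreads : Reads (memRho n d T E pf) (fun k => (1, pf k, 1)) := fun k => rfl
  have hmcu : ∀ k, T ≤ k →
      List.countP (fun x => decide (E+1 ≤ x)) (update (pf k) (memQ n d T E pf k))
        = List.countP (fun x => decide (E+1 ≤ x)) (memQ n d T E pf k) := by
    intro k hk
    exact countP_update_small (hSI k).1 (by have := hTle k hk; omega)
  let mc : ℕ → ℕ := fun k => List.countP (fun x => decide (E+1 ≤ x)) (memQ n d T E pf k)
  have hmcfold : ∀ k,
      List.countP (fun x => decide (E+1 ≤ x)) (memQ n d T E pf k) = mc k := fun _ => rfl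
  have hmcle : ∀ k, T ≤ k → mc (k+1) ≤ mc k := by
    intro k hk
    show List.countP _ (memStep n T E pf k (memQ n d T E pf k)) ≤ _
    unfold memStep
    split
    · have heq := countP_resetReg_eq (c := E+1) (l := update (pf k) (memQ n d T E pf k))
        (by omega) (rn_pos n) (by rw [hulen k])
      rw [hmcu k hk, hmcfold k] at heq
      show List.countP _ _ ≤ mc k
      omega
    · exact le_of_eq (hmcu k hk)
  obtain ⟨T2, hT2ge, hT2c⟩ := stabilizes mc T hmcle
  have hmc0 : mc T2 = 0 := by
    by_contra h0
    obtain ⟨k, hkge, hkE⟩ := hIO T2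
    have hmck : mc k = mc T2 := hT2c k hkge
    have hpos : 0 < List.countP (fun x => decide (E+1 ≤ x)) (memQ n d T E pf k) := by
      rw [hmcfold k]
      omega
    obtain ⟨x, hxmem, hx⟩ := List.countP_pos_iff.1 hpos
    have hxE : E + 1 ≤ x := of_decide_eq_true hx
    have hs := hSI k
    obtain ⟨i, hi, hgx⟩ := List.mem_iff_getElem.1 hxmem
    have hlen : rn n - 1 < (memQ n d T E pf k).length := by
      rw [hs.2.1]; have := rn_pos n; omega
    have htop : E + 1 ≤ regVal (rn n) (memQ n d T E pf k) := by
      unfold regVal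
      have h1 : (memQ n d T E pf k).getD i 0 ≤ (memQ n d T E pf k).getD (rn n - 1) 0 :=
        sorted_getD_le hs.1 (by rw [hs.2.1] at hi; omega) hlen
      rw [List.getD_eq_getElem _ _ hi, hgx] at h1
      omega
    have htopu : E + 1 ≤ regVal (rn n) (update (pf k) (memQ n d T E pf k)) := by
      refine le_trans htop ?_
      unfold regVal
      exact update_getD_ge hs.1 _ (by rw [hs.2.1]; have := rn_pos n; omega)
    have heq := countP_resetReg_eq (c := E+1) (l := update (pf k) (memQ n d T E pf k))
      (by omega) (rn_pos n) (by rw [hulen k])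
    rw [hmcu k (by omega), if_pos htopu, hmcfold k] at heq
    have hstep : mc (k+1) = List.countP (fun x => decide (E+1 ≤ x))
        (resetReg (rn n) (update (pf k) (memQ n d T E pf k))) := by
      show List.countP _ (memStep n T E pf k (memQ n d T E pf k)) = _
      unfold memStep
      rw [if_pos (show T ≤ k ∧ pf k = E from ⟨by omega, hkE⟩)]
    have e2 : mc (k+1) = mc T2 := hT2c (k+1) (by omega)
    omega
  have hallE : ∀ k, T2 ≤ k → pf k = E →
      regVal (rn n) (update (pf k) (memQ n d T E pf k)) = E := by
    intro k hk hE
    have hmck : mc k = 0 := by rw [hT2c k hk]; exact hmc0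
    have hle : ∀ x ∈ memQ n d T E pf k, x ≤ E := by
      intro x hx
      by_contra hgt
      have : 0 < mc k := by
        rw [← hmcfold k]
        exact List.countP_pos_iff.2 ⟨x, hx, decide_eq_true (by omega)⟩
      omega
    have hupall : ∀ x ∈ update (pf k) (memQ n d T E pf k), x = E := by
      intro x hx
      have hge := update_all_ge (hSI k).1 (pf k) x hx
      rcases mem_update (hSI k).1 hx with rfl | hx2
      · exact hE
      · have := hle x hx2
        omega
    have hlen : rn n - 1 < (update (pf k) (memQ n d T E pf k)).length := by
      rw [hulen k]; have := rn_pos n; omega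
    unfold regVal
    rw [List.getD_eq_getElem _ _ hlen]
    exact hupall _ (List.getElem_mem _)
  refine ⟨memRho n d T E pf, hrun, hreads, 2 * rn n, ⟨rn n, by ring⟩, ?_, ?_⟩
  · intro N
    obtain ⟨k, hk, hkE⟩ := hIO (max N (max T T2))
    have hTk : T ≤ k := le_trans (le_trans (le_max_left T T2) (le_max_right N _)) hk
    have hT2k : T2 ≤ k := le_trans (le_trans (le_max_right T T2) (le_max_right N _)) hk
    refine ⟨k, le_trans (le_max_left _ _) hk, ?_⟩
    show memPe n d T E pf k = 2 * rn n
    unfold memPe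
    rw [if_pos ⟨hTk, hkE⟩, if_pos (by rw [hallE k hT2k hkE]; exact hEe)]
  · intro q' hq'
    obtain ⟨k, hk, hkq⟩ := hq' (max T T2)
    have hkq' : memPe n d T E pf k = q' := hkq
    have : memPe n d T E pf k = 1 ∨ memPe n d T E pf k = 2 * rn n := by
      unfold memPe
      split
      · rename_i hc
        rw [if_pos (by rw [hallE k (le_trans (le_max_right T T2) hk) hc.2]; exact hEe)]
        right; rfl
      · left; rfl
    have hrp := rn_pos n
    rcases this with h | h <;> omega
end NotGFGAux5

/-- For `d ≥ 2·rn(n) + 2` (even), `R_{n,d}` is not good for games: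
for every transition strategy `σ` there is a word of `L(R_{n,d})` on which the run
following `σ` is rejecting. -/
theorem Raut_not_gfg (n d : ℕ) (hn : 1 ≤ n) (hde : Even d)
    (hd : 2 * rn n + 2 ≤ d) (σ : TransStrat n d (Raut n d)) :
    ∃ w ∈ Lang (Raut n d), ¬ Accepting (followRun (Raut n d) σ w) := by
  refine ⟨advW n d σ, ?_, adv_rejects σ hn hd⟩
  have hrej := adv_rejects σ hn hd
  have hbd : ∀ i, emE n d σ i ≤ 2 * rn n + 1 := fun i => (emE_bounds σ hn hd i).2
  obtain ⟨M, hMio, hMmax⟩ := exists_maxInfOft (emE n d σ) (2*rn n+1) hbd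
  have hModd : ¬ Even M := fun hev => hrej ⟨M, hev, hMio, hMmax⟩
  rw [Nat.even_iff] at hModd
  have hM1 : 1 ≤ M := by
    obtain ⟨k, -, hk⟩ := hMio 0
    have := (emE_bounds σ hn hd k).1
    omega
  obtain ⟨T, hT⟩ := eventually_le_max (emE n d σ) (2*rn n+1) M hbd hMmax
  have hMd : M ≤ 2*rn n + 1 := infOft_le_of_bdd hbd hMio
  have hE2 : 2 ≤ advG M := by unfold advG; split <;> omega
  have hEe : Even (advG M) := by
    rw [Nat.even_iff]
    unfold advG
    split <;> omega
  have hTle : ∀ k, T + 1 ≤ k → advPr n d σ k ≤ advG M := by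
    intro k hk
    obtain ⟨k', rfl⟩ : ∃ k', k = k' + 1 := ⟨k - 1, by omega⟩
    have h1 : emE n d σ k' ≤ M := hT k' (by omega)
    have h2 : 1 ≤ emE n d σ k' := (emE_bounds σ hn hd k').1
    rw [advPr_succ]
    show advG (emE n d σ k') ≤ advG M
    unfold advG
    split <;> split <;> omega
  have hIOE : InfOft (advPr n d σ) (advG M) := by
    intro N
    obtain ⟨k, hkge, hk⟩ := hMio N
    refine ⟨k+1, by omega, ?_⟩
    rw [advPr_succ]
    show advG (emE n d σ k) = advG M
    rw [hk]
  have hpfb : ∀ k, 1 ≤ advPr n d σ k ∧ advPr n d σ k ≤ d := by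
    intro k
    have := advPr_bounds σ hn hd k
    omega
  exact mem_lang_of_eventually n d hn (advPr n d σ) hpfb (advG M) (T+1) hE2 hEe hTle hIOE


end PGSep
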